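/- Hardy-type inequality: let α > -1 and h : (0,∞) → ℝ measurable with ∫₀^∞ |h(t)|² t^{α+2} dt < ∞. Define H(t) = ∫_t^∞ |h(s)| ds. Then ∫₀^∞ H(t)² t^α dt ≤ (4/(α+1)²) ∫₀^∞ |h(t)|² t^{α+2} dt. -/

import Mathlib

open MeasureTheory Set
open scoped ENNReal

/-- Tonelli swap for the Hardy inequality. -/
lemma hardy_swap (f w : ℝ → ℝ≥0∞) (hf : Measurable f) (hw : Measurable w) :
    ∫⁻ t in Ioi (0:ℝ), w t * ∫⁻ s in Ioi t, f s
      = ∫⁻ s in Ioi (0:ℝ), f s * ∫⁻ t in Ioo 0 s, w t := by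
  have hset : MeasurableSet {z : ℝ × ℝ | z.1 < z.2} :=
    measurableSet_lt measurable_fst measurable_snd
  have hF : Measurable ({z : ℝ × ℝ | z.1 < z.2}.indicator (fun z => w z.1 * f z.2)) :=
    ((hw.comp measurable_fst).mul (hf.comp measurable_snd)).indicator hset
  calc ∫⁻ t in Ioi (0:ℝ), w t * ∫⁻ s in Ioi t, f s
      = ∫⁻ t in Ioi (0:ℝ), ∫⁻ s in Ioi (0:ℝ),
          {z : ℝ × ℝ | z.1 < z.2}.indicator (fun z => w z.1 * f z.2) (t, s) := by
        refine setLIntegral_congr_fun measurableSet_Ioi (fun t ht => ?_)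
        have hpt : ∀ s : ℝ, {z : ℝ × ℝ | z.1 < z.2}.indicator (fun z => w z.1 * f z.2) (t, s)
            = (Ioi t).indicator (fun s => w t * f s) s := by
          intro s; by_cases hs : t < s <;> simp [indicator, hs]
        simp_rw [hpt]
        rw [lintegral_indicator measurableSet_Ioi, Measure.restrict_restrict measurableSet_Ioi,
          inter_eq_self_of_subset_left (Ioi_subset_Ioi ht.le),
          lintegral_const_mul _ hf]
    _ = ∫⁻ s in Ioi (0:ℝ), ∫⁻ t in Ioi (0:ℝ),
          {z : ℝ × ℝ | z.1 < z.2}.indicator (fun z => w z.1 * f z.2) (t, s) := by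
        exact lintegral_lintegral_swap hF.aemeasurable
    _ = ∫⁻ s in Ioi (0:ℝ), f s * ∫⁻ t in Ioo 0 s, w t := by
        refine setLIntegral_congr_fun measurableSet_Ioi (fun s hs => ?_)
        have hpt : ∀ t : ℝ, {z : ℝ × ℝ | z.1 < z.2}.indicator (fun z => w z.1 * f z.2) (t, s)
            = (Iio s).indicator (fun t => w t * f s) t := by
          intro t; by_cases ht : t < s <;> simp [indicator, ht]
        simp_rw [hpt]
        rw [lintegral_indicator measurableSet_Iio, Measure.restrict_restrict measurableSet_Iio,
          show Iio s ∩ Ioi (0:ℝ) = Ioo 0 s by rw [inter_comm]; exact Ioi_inter_Iio,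
          lintegral_mul_const _ hw, mul_comm]

/-- value of `∫⁻ t in Ioo 0 s, t ^ q` for `q > -1`. -/
lemma hardy_powint1 {q : ℝ} (hq : -1 < q) {s : ℝ} (hs : 0 < s) :
    ∫⁻ t in Ioo (0:ℝ) s, ENNReal.ofReal (t ^ q) = ENNReal.ofReal (s ^ (q+1) / (q+1)) := by
  have hint : IntegrableOn (fun t : ℝ => t ^ q) (Ioo 0 s) := by
    have h1 : IntervalIntegrable (fun t : ℝ => t ^ q) volume 0 s := intervalIntegral.intervalIntegrable_rpow' hq
    exact ((intervalIntegrable_iff_integrableOn_Ioc_of_le hs.le).mp h1).mono_set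
      Ioo_subset_Ioc_self
  rw [← ofReal_integral_eq_lintegral_ofReal hint ?nn]
  case nn =>
    filter_upwards [ae_restrict_mem measurableSet_Ioo] with t ht
    exact Real.rpow_nonneg ht.1.le q
  congr 1
  rw [← integral_Ioc_eq_integral_Ioo, ← intervalIntegral.integral_of_le hs.le,
    integral_rpow (Or.inl hq), Real.zero_rpow (by linarith : q + 1 ≠ 0)]
  ring

/-- value of `∫⁻ s in Ioi t, s ^ (-p)` for `p > 1`. -/
lemma hardy_powint2 {p : ℝ} (hp : 1 < p) {t : ℝ} (ht : 0 < t) :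
    ∫⁻ s in Ioi t, ENNReal.ofReal (s ^ (-p)) = ENNReal.ofReal (t ^ (1-p) / (p-1)) := by
  have hlt : -p < -1 := by linarith
  rw [← ofReal_integral_eq_lintegral_ofReal (integrableOn_Ioi_rpow_of_lt hlt ht) ?nn]
  case nn =>
    filter_upwards [ae_restrict_mem measurableSet_Ioi] with s hs
    exact Real.rpow_nonneg (ht.trans hs).le _
  congr 1
  rw [integral_Ioi_rpow_of_lt hlt ht, show -p + 1 = 1 - p by ring]
  rw [show (1:ℝ) - p = -(p-1) by ring] at *
  rw [neg_div_neg_eq]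

/-- Cauchy–Schwarz step. -/
lemma hardy_cs (h : ℝ → ℝ) (hmeas : Measurable h) (P : ℝ) {t : ℝ} (ht : 0 < t) :
    (∫⁻ s in Ioi t, ENNReal.ofReal |h s|) ^ 2
      ≤ (∫⁻ s in Ioi t, ENNReal.ofReal (h s ^ 2 * s ^ P)) *
          ∫⁻ s in Ioi t, ENNReal.ofReal (s ^ (-P)) := by
  set f : ℝ → ℝ≥0∞ := fun s => ENNReal.ofReal (|h s| * s ^ (P/2)) with hf_def
  set g : ℝ → ℝ≥0∞ := fun s => ENNReal.ofReal (s ^ (-(P/2))) with hg_def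
  have hfm : Measurable f := by fun_prop
  have hgm : Measurable g := by fun_prop
  have h22 : Real.HolderConjugate 2 2 := ⟨by norm_num, by norm_num, by norm_num⟩
  have hstep1 : ∫⁻ s in Ioi t, ENNReal.ofReal |h s| = ∫⁻ s in Ioi t, f s * g s := by
    refine setLIntegral_congr_fun measurableSet_Ioi (fun s hs => ?_)
    have hs0 : (0:ℝ) < s := ht.trans hs
    rw [hf_def, hg_def, ← ENNReal.ofReal_mul (by positivity), mul_assoc,
      ← Real.rpow_add hs0, add_neg_cancel, Real.rpow_zero, mul_one]
  have hholder := ENNReal.lintegral_mul_le_Lp_mul_Lq (volume.restrict (Ioi t)) h22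
    hfm.aemeasurable hgm.aemeasurable
  have hf2 : ∫⁻ s in Ioi t, f s ^ (2:ℝ) = ∫⁻ s in Ioi t, ENNReal.ofReal (h s ^ 2 * s ^ P) := by
    refine setLIntegral_congr_fun measurableSet_Ioi (fun s hs => ?_)
    have hs0 : (0:ℝ) < s := ht.trans hs
    rw [hf_def, ENNReal.ofReal_rpow_of_nonneg (by positivity) (by norm_num)]
    congr 1
    rw [Real.mul_rpow (abs_nonneg _) (Real.rpow_nonneg hs0.le _), Real.rpow_two,
      Real.rpow_two, sq_abs]
    congr 1
    rw [pow_two, ← Real.rpow_add hs0, add_halves]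
  have hg2 : ∫⁻ s in Ioi t, g s ^ (2:ℝ) = ∫⁻ s in Ioi t, ENNReal.ofReal (s ^ (-P)) := by
    refine setLIntegral_congr_fun measurableSet_Ioi (fun s hs => ?_)
    have hs0 : (0:ℝ) < s := ht.trans hs
    rw [hg_def, ENNReal.ofReal_rpow_of_nonneg (Real.rpow_nonneg hs0.le _) (by norm_num)]
    congr 1
    rw [Real.rpow_two, pow_two, ← Real.rpow_add hs0]
    congr 1
    ring
  calc (∫⁻ s in Ioi t, ENNReal.ofReal |h s|) ^ 2
      = (∫⁻ s in Ioi t, f s * g s) ^ 2 := by rw [hstep1]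
    _ ≤ ((∫⁻ s in Ioi t, f s ^ (2:ℝ)) ^ (1/(2:ℝ)) *
          (∫⁻ s in Ioi t, g s ^ (2:ℝ)) ^ (1/(2:ℝ))) ^ 2 := by
        gcongr
        exact hholder
    _ = (∫⁻ s in Ioi t, f s ^ (2:ℝ)) * ∫⁻ s in Ioi t, g s ^ (2:ℝ) := by
        rw [mul_pow, ← ENNReal.rpow_natCast (_ ^ (1/(2:ℝ))) 2, ← ENNReal.rpow_natCast
          ((∫⁻ s in Ioi t, g s ^ (2:ℝ)) ^ (1/(2:ℝ))) 2, ← ENNReal.rpow_mul, ← ENNReal.rpow_mul]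
        norm_num
    _ = _ := by rw [hf2, hg2]

/-- Hardy-type inequality: for `α > -1` and `h` measurable with
`∫₀^∞ |h|² t^{α+2} dt < ∞`, with `H(t) = ∫_t^∞ |h(s)| ds` one has
`∫₀^∞ H(t)² t^α dt ≤ (4/(α+1)²) ∫₀^∞ |h(t)|² t^{α+2} dt`. -/
theorem stmt3 (α : ℝ) (hα : -1 < α) (h : ℝ → ℝ) (hmeas : Measurable h)
    (hfin : IntegrableOn (fun t => h t ^ 2 * t ^ (α + 2)) (Ioi 0)) :
    (∫ t in Ioi (0 : ℝ), (∫ s in Ioi t, |h s|) ^ 2 * t ^ α) ≤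
      4 / (α + 1) ^ 2 * ∫ t in Ioi (0 : ℝ), h t ^ 2 * t ^ (α + 2) := by
  have hα1 : (0:ℝ) < α + 1 := by linarith
  set c : ℝ := (α + 1) / 2 with hc_def
  have hc : 0 < c := by positivity
  set P : ℝ := c + 1 with hP_def
  have hP1 : 1 < P := by rw [hP_def]; linarith
  have hPc : P + c = α + 2 := by rw [hP_def, hc_def]; ring
  -- lintegral notation
  set L : ℝ → ℝ≥0∞ := fun t => ∫⁻ s in Ioi t, ENNReal.ofReal |h s| with hL_def
  set G : ℝ → ℝ≥0∞ := fun t => ∫⁻ s in Ioi t, ENNReal.ofReal (h s ^ 2 * s ^ P) with hG_def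
  set Itot : ℝ≥0∞ := ∫⁻ s in Ioi (0:ℝ), ENNReal.ofReal (h s ^ 2 * s ^ (α + 2)) with hItot_def
  have hnnI : 0 ≤ᵐ[volume.restrict (Ioi (0:ℝ))] fun t => h t ^ 2 * t ^ (α + 2) := by
    filter_upwards [ae_restrict_mem measurableSet_Ioi] with t ht
    exact mul_nonneg (sq_nonneg _) (Real.rpow_nonneg ht.le _)
  have hItot : Itot = ENNReal.ofReal (∫ t in Ioi (0:ℝ), h t ^ 2 * t ^ (α + 2)) :=
    (ofReal_integral_eq_lintegral_ofReal hfin hnnI).symm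
  have hItotfin : Itot ≠ ⊤ := by rw [hItot]; exact ENNReal.ofReal_ne_top
  -- G t is finite for t > 0
  have hGfin : ∀ t : ℝ, 0 < t → G t ≠ ⊤ := by
    intro t ht
    have hGle : G t ≤ ENNReal.ofReal (t ^ (-c)) * Itot := by
      have hmono : G t ≤ ∫⁻ s in Ioi t, ENNReal.ofReal (t ^ (-c)) *
          ENNReal.ofReal (h s ^ 2 * s ^ (α + 2)) := by
        refine setLIntegral_mono' measurableSet_Ioi fun s hs => ?_
        have hs0 : (0:ℝ) < s := ht.trans hs
        rw [← ENNReal.ofReal_mul (Real.rpow_nonneg ht.le _)]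
        apply ENNReal.ofReal_le_ofReal
        have : s ^ P = s ^ (α + 2) * s ^ (-c) := by
          rw [← Real.rpow_add hs0, show α + 2 + -c = P by rw [← hPc]; ring]
        rw [this]
        have hsc : s ^ (-c) ≤ t ^ (-c) :=
          Real.rpow_le_rpow_of_nonpos ht hs.le (by linarith)
        calc h s ^ 2 * (s ^ (α + 2) * s ^ (-c)) = h s ^ 2 * s ^ (α + 2) * s ^ (-c) := by ring
          _ ≤ h s ^ 2 * s ^ (α + 2) * t ^ (-c) := by
              apply mul_le_mul_of_nonneg_left hsc
              exact mul_nonneg (sq_nonneg _) (Real.rpow_nonneg hs0.le _)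
          _ = t ^ (-c) * (h s ^ 2 * s ^ (α + 2)) := by ring
      calc G t ≤ _ := hmono
        _ = ENNReal.ofReal (t ^ (-c)) * ∫⁻ s in Ioi t,
            ENNReal.ofReal (h s ^ 2 * s ^ (α + 2)) := lintegral_const_mul _ (by fun_prop)
        _ ≤ ENNReal.ofReal (t ^ (-c)) * Itot := by
            gcongr
            exact lintegral_mono_set (Ioi_subset_Ioi ht.le)
    exact ne_top_of_le_ne_top (ENNReal.mul_ne_top ENNReal.ofReal_ne_top hItotfin) hGle
  -- the Cauchy-Schwarz bound
  have hCS : ∀ t : ℝ, 0 < t →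
      L t ^ 2 ≤ G t * ENNReal.ofReal (t ^ (1 - P) / (P - 1)) := by
    intro t ht
    have := hardy_cs h hmeas P ht
    rwa [hardy_powint2 hP1 ht] at this
  -- L t is finite for t > 0
  have hLfin : ∀ t : ℝ, 0 < t → L t ≠ ⊤ := by
    intro t ht
    intro htop
    have h1 := hCS t ht
    rw [htop] at h1
    rw [ENNReal.top_pow (by norm_num), top_le_iff] at h1
    exact (ENNReal.mul_ne_top (hGfin t ht) ENNReal.ofReal_ne_top) h1
  -- measurability of L and G
  have hLmeas : Measurable L := by
    have : Antitone L := fun a b hab => lintegral_mono_set (Ioi_subset_Ioi hab)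
    exact this.measurable
  have hGmeas : Measurable G := by
    have : Antitone G := fun a b hab => lintegral_mono_set (Ioi_subset_Ioi hab)
    exact this.measurable
  -- identification of the inner integral H t
  have hH : ∀ t : ℝ, (∫ s in Ioi t, |h s|) = (L t).toReal := by
    intro t
    rw [hL_def]
    exact integral_eq_lintegral_of_nonneg_ae (ae_of_all _ fun s => abs_nonneg _)
      (hmeas.abs.aestronglyMeasurable)
  -- main chain in ℝ≥0∞
  have hmain : ∫⁻ t in Ioi (0:ℝ), L t ^ 2 * ENNReal.ofReal (t ^ α)
      ≤ ENNReal.ofReal c⁻¹ * (ENNReal.ofReal c⁻¹ * Itot) := by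
    calc ∫⁻ t in Ioi (0:ℝ), L t ^ 2 * ENNReal.ofReal (t ^ α)
        ≤ ∫⁻ t in Ioi (0:ℝ), ENNReal.ofReal c⁻¹ *
            (ENNReal.ofReal (t ^ (c - 1)) * G t) := by
          refine setLIntegral_mono' measurableSet_Ioi fun t ht => ?_
          calc L t ^ 2 * ENNReal.ofReal (t ^ α)
              ≤ G t * ENNReal.ofReal (t ^ (1 - P) / (P - 1)) * ENNReal.ofReal (t ^ α) := by
                gcongr
                exact hCS t ht
            _ = ENNReal.ofReal c⁻¹ * (ENNReal.ofReal (t ^ (c - 1)) * G t) := by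
                have ht0 : (0:ℝ) < t := ht
                have hPc1 : P - 1 = c := by rw [hP_def]; ring
                rw [mul_assoc, ← ENNReal.ofReal_mul
                  (div_nonneg (Real.rpow_nonneg ht0.le _) (by rw [hPc1]; exact hc.le))]
                have harith : t ^ (1 - P) / (P - 1) * t ^ α = c⁻¹ * t ^ (c - 1) := by
                  rw [div_mul_eq_mul_div, ← Real.rpow_add ht0,
                    show 1 - P + α = c - 1 by rw [hP_def, hc_def]; ring, hPc1]
                  ring
                rw [harith, ENNReal.ofReal_mul (by positivity)]
                ring
      _ = ENNReal.ofReal c⁻¹ * ∫⁻ t in Ioi (0:ℝ),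
            ENNReal.ofReal (t ^ (c - 1)) * G t := lintegral_const_mul _ (by fun_prop)
      _ = ENNReal.ofReal c⁻¹ * ∫⁻ s in Ioi (0:ℝ), ENNReal.ofReal (h s ^ 2 * s ^ P) *
            ∫⁻ t in Ioo 0 s, ENNReal.ofReal (t ^ (c - 1)) := by
          rw [hardy_swap _ _ (by fun_prop) (by fun_prop)]
      _ = ENNReal.ofReal c⁻¹ * ∫⁻ s in Ioi (0:ℝ),
            ENNReal.ofReal c⁻¹ * ENNReal.ofReal (h s ^ 2 * s ^ (α + 2)) := by
          congr 1
          refine setLIntegral_congr_fun measurableSet_Ioi (fun s hs => ?_)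
          rw [hardy_powint1 (by linarith : (-1:ℝ) < c - 1) hs,
            show c - 1 + 1 = c by ring]
          rw [← ENNReal.ofReal_mul (mul_nonneg (sq_nonneg _) (Real.rpow_nonneg hs.le _))]
          rw [← ENNReal.ofReal_mul (by positivity)]
          congr 1
          rw [div_eq_mul_inv, ← mul_assoc, mul_assoc (h s ^ 2), ← Real.rpow_add hs, hPc]
          ring
      _ = ENNReal.ofReal c⁻¹ * (ENNReal.ofReal c⁻¹ * Itot) := by
          rw [lintegral_const_mul _ (by fun_prop)]
  -- conclude
  have hRnn : 0 ≤ ∫ t in Ioi (0:ℝ), h t ^ 2 * t ^ (α + 2) :=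
    setIntegral_nonneg measurableSet_Ioi fun t ht =>
      mul_nonneg (sq_nonneg _) (Real.rpow_nonneg (le_of_lt ht) _)
  have hHmeas : Measurable fun t : ℝ => (∫ s in Ioi t, |h s|) ^ 2 * t ^ α := by
    have : (fun t : ℝ => (∫ s in Ioi t, |h s|) ^ 2 * t ^ α)
        = fun t : ℝ => (L t).toReal ^ 2 * t ^ α := by
      funext t; rw [hH t]
    rw [this]
    fun_prop
  have hlhs : (∫ t in Ioi (0:ℝ), (∫ s in Ioi t, |h s|) ^ 2 * t ^ α)
      = (∫⁻ t in Ioi (0:ℝ), L t ^ 2 * ENNReal.ofReal (t ^ α)).toReal := by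
    rw [integral_eq_lintegral_of_nonneg_ae ?nn hHmeas.aestronglyMeasurable]
    case nn =>
      filter_upwards [ae_restrict_mem measurableSet_Ioi] with t ht
      exact mul_nonneg (sq_nonneg _) (Real.rpow_nonneg ht.le _)
    congr 1
    refine setLIntegral_congr_fun measurableSet_Ioi (fun t ht => ?_)
    rw [hH t, ENNReal.ofReal_mul (sq_nonneg _), ENNReal.ofReal_pow ENNReal.toReal_nonneg,
      ENNReal.ofReal_toReal (hLfin t ht)]
  rw [hlhs]
  have hfinal : (ENNReal.ofReal c⁻¹ * (ENNReal.ofReal c⁻¹ * Itot)).toReal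
      = 4 / (α + 1) ^ 2 * ∫ t in Ioi (0:ℝ), h t ^ 2 * t ^ (α + 2) := by
    rw [hItot, ENNReal.toReal_mul, ENNReal.toReal_mul, ENNReal.toReal_ofReal (by positivity),
      ENNReal.toReal_ofReal hRnn, ← mul_assoc]
    congr 1
    rw [hc_def]
    field_simp
    ring
  calc (∫⁻ t in Ioi (0:ℝ), L t ^ 2 * ENNReal.ofReal (t ^ α)).toReal
      ≤ (ENNReal.ofReal c⁻¹ * (ENNReal.ofReal c⁻¹ * Itot)).toReal := by
        apply ENNReal.toReal_mono _ hmain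
        exact ENNReal.mul_ne_top ENNReal.ofReal_ne_top
          (ENNReal.mul_ne_top ENNReal.ofReal_ne_top hItotfin)
    _ = _ := hfinal
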